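/- arXiv:0705.4256 — 2 statements merged into one kernel-verified Lean document; each statement's English description precedes it below -/
import Mathlib

section
/- Let q be a prime power, F_q the finite field with q elements, ε > 0 a real number, and C ≥ 1 a real constant. Let d be the smallest positive integer with d ≥ 1/2 + 1/(4ε). If A ⊆ F_q satisfies |A| ≥ C^(1/d) · q^(1/2 + ε), then |dA²| ≥ q · C^(2 - 1/d) / (C^(2 - 1/d) + 1). -/
open Finset

-- conjugate of additive character value
lemma aux_conj_psi {F : Type*} [Field F] [Fintype F] (ψ : AddChar F ℂ) (a : F) :
    (starRingEnd ℂ) (ψ a) = ψ (-a) := by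
  have h : 0 < ringChar F := (CharP.char_is_prime F (ringChar F)).pos
  rw [AddChar.starComp_apply h, AddChar.inv_apply]

-- additive char of a sum is a product
lemma aux_psi_sum {F : Type*} [AddCommGroup F] (ψ : AddChar F ℂ) {ι : Type*} (s : Finset ι)
    (f : ι → F) : ψ (∑ i ∈ s, f i) = ∏ i ∈ s, ψ (f i) := by
  classical
  induction s using Finset.induction_on with
  | empty => simp
  | insert _ _ h ih => rw [Finset.sum_insert h, Finset.prod_insert h, AddChar.map_add_eq_mul, ih]

-- generic Parseval-type identity
lemma aux_parseval {F : Type*} [Field F] [Fintype F] [DecidableEq F] {ψ : AddChar F ℂ}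
    (hψ : ψ.IsPrimitive) {γ : Type*} [DecidableEq γ] (S : Finset γ) (g : γ → F) :
    ∑ s : F, ‖∑ z ∈ S, ψ (s * g z)‖ ^ 2
      = (Fintype.card F : ℝ) * #((S ×ˢ S).filter fun z => g z.1 = g z.2) := by
  have key : ∀ s : F, ((‖∑ z ∈ S, ψ (s * g z)‖ ^ 2 : ℝ) : ℂ)
      = ∑ z ∈ S, ∑ w ∈ S, ψ (s * (g z - g w)) := by
    intro s
    have h1 : ((‖∑ z ∈ S, ψ (s * g z)‖ ^ 2 : ℝ) : ℂ)
        = (∑ z ∈ S, ψ (s * g z)) * (starRingEnd ℂ) (∑ z ∈ S, ψ (s * g z)) := by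
      rw [Complex.mul_conj]
      norm_cast
      rw [Complex.normSq_eq_norm_sq]
    rw [h1, map_sum, Finset.sum_mul_sum]
    refine Finset.sum_congr rfl fun z _ => Finset.sum_congr rfl fun w _ => ?_
    rw [aux_conj_psi, ← AddChar.map_add_eq_mul]
    ring_nf
  have := Complex.ofReal_injective (a₁ := ∑ s : F, ‖∑ z ∈ S, ψ (s * g z)‖ ^ 2)
    (a₂ := ((Fintype.card F : ℝ) * #((S ×ˢ S).filter fun z => g z.1 = g z.2)))
  apply this
  push_cast
  calc (∑ s : F, (‖∑ z ∈ S, ψ (s * g z)‖ : ℂ) ^ 2)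
      = ∑ s : F, ∑ z ∈ S, ∑ w ∈ S, ψ (s * (g z - g w)) := by
        refine Finset.sum_congr rfl fun s _ => ?_
        rw [← key s]; push_cast; ring
    _ = ∑ z ∈ S, ∑ w ∈ S, ∑ s : F, ψ (s * (g z - g w)) := by
        rw [Finset.sum_comm]
        refine Finset.sum_congr rfl fun z _ => Finset.sum_comm
    _ = ∑ z ∈ S, ∑ w ∈ S, if g z = g w then (Fintype.card F : ℂ) else 0 := by
        refine Finset.sum_congr rfl fun z _ => Finset.sum_congr rfl fun w _ => ?_
        rw [AddChar.sum_mulShift _ hψ]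
        simp [sub_eq_zero]
    _ = (Fintype.card F : ℂ) * #((S ×ˢ S).filter fun z => g z.1 = g z.2) := by
        rw [Finset.card_filter]
        push_cast
        rw [Finset.mul_sum, Finset.sum_product]
        refine Finset.sum_congr rfl fun z _ => ?_
        refine Finset.sum_congr rfl fun w _ => ?_
        split_ifs <;> simp

-- factorization T s = W s ^ d
lemma aux_factor {F : Type*} [Field F] [Fintype F] [DecidableEq F] (ψ : AddChar F ℂ)
    (A : Finset F) (d : ℕ) (s : F) :
    ∑ p ∈ (Fintype.piFinset fun _ : Fin d => A) ×ˢ (Fintype.piFinset fun _ : Fin d => A),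
        ψ (s * ∑ i, p.1 i * p.2 i)
      = (∑ z ∈ A ×ˢ A, ψ (s * (z.1 * z.2))) ^ d := by
  have hW : (∑ z ∈ A ×ˢ A, ψ (s * (z.1 * z.2))) = ∑ x ∈ A, ∑ y ∈ A, ψ (s * (x * y)) := by
    rw [Finset.sum_product]
  rw [hW, Finset.sum_product]
  calc (∑ a ∈ Fintype.piFinset fun _ : Fin d => A, ∑ b ∈ Fintype.piFinset fun _ : Fin d => A,
          ψ (s * ∑ i, a i * b i))
      = ∑ a ∈ Fintype.piFinset fun _ : Fin d => A, ∑ b ∈ Fintype.piFinset fun _ : Fin d => A,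
          ∏ i, ψ (s * (a i * b i)) := by
        refine Finset.sum_congr rfl fun a _ => Finset.sum_congr rfl fun b _ => ?_
        rw [Finset.mul_sum, aux_psi_sum]
    _ = ∑ a ∈ Fintype.piFinset fun _ : Fin d => A, ∏ i, ∑ y ∈ A, ψ (s * (a i * y)) := by
        refine Finset.sum_congr rfl fun a _ => ?_
        exact Finset.sum_prod_piFinset A fun i y => ψ (s * (a i * y))
    _ = ∏ i : Fin d, ∑ x ∈ A, ∑ y ∈ A, ψ (s * (x * y)) :=
        Finset.sum_prod_piFinset A fun _ x => ∑ y ∈ A, ψ (s * (x * y))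
    _ = (∑ x ∈ A, ∑ y ∈ A, ψ (s * (x * y))) ^ d := by
        rw [Finset.prod_const, Finset.card_univ, Fintype.card_fin]

-- diagonal count
lemma aux_diag {F : Type*} [DecidableEq F] (A : Finset F) :
    #((A ×ˢ A).filter fun z => z.1 = z.2) = #A := by
  refine Finset.card_bij' (fun z _ => z.1) (fun a _ => (a, a)) ?_ ?_ ?_ ?_ <;>
    simp +contextual [Finset.mem_filter, Finset.mem_product, eq_comm]

-- pointwise bound on W
lemma aux_W_bound {F : Type*} [Field F] [Fintype F] [DecidableEq F] {ψ : AddChar F ℂ}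
    (hψ : ψ.IsPrimitive) (A : Finset F) {s : F} (hs : s ≠ 0) :
    ‖∑ z ∈ A ×ˢ A, ψ (s * (z.1 * z.2))‖ ^ 2 ≤ (Fintype.card F : ℝ) * (#A : ℝ) ^ 2 := by
  have hW : (∑ z ∈ A ×ˢ A, ψ (s * (z.1 * z.2))) = ∑ x ∈ A, ∑ y ∈ A, ψ (x * (s * y)) := by
    rw [Finset.sum_product]
    refine Finset.sum_congr rfl fun x _ => Finset.sum_congr rfl fun y _ => ?_
    ring_nf
  rw [hW]
  have h1 : ‖∑ x ∈ A, ∑ y ∈ A, ψ (x * (s * y))‖ ≤ ∑ x ∈ A, ‖∑ y ∈ A, ψ (x * (s * y))‖ :=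
    norm_sum_le _ _
  have h2 : (∑ x ∈ A, ‖∑ y ∈ A, ψ (x * (s * y))‖) ^ 2
      ≤ (#A : ℝ) * ∑ x ∈ A, ‖∑ y ∈ A, ψ (x * (s * y))‖ ^ 2 :=
    sq_sum_le_card_mul_sum_sq
  have h3 : (∑ x ∈ A, ‖∑ y ∈ A, ψ (x * (s * y))‖ ^ 2)
      ≤ ∑ x : F, ‖∑ y ∈ A, ψ (x * (s * y))‖ ^ 2 :=
    Finset.sum_le_sum_of_subset_of_nonneg (Finset.subset_univ A)
      (fun _ _ _ => sq_nonneg _)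
  have h4 : ∑ x : F, ‖∑ y ∈ A, ψ (x * (s * y))‖ ^ 2
      = (Fintype.card F : ℝ) * #((A ×ˢ A).filter fun z => s * z.1 = s * z.2) :=
    aux_parseval hψ A (fun y => s * y)
  have h5 : ((A ×ˢ A).filter fun z => s * z.1 = s * z.2)
      = (A ×ˢ A).filter fun z => z.1 = z.2 := by
    refine Finset.filter_congr fun z _ => ?_
    simp [mul_right_inj' hs]
  calc ‖∑ x ∈ A, ∑ y ∈ A, ψ (x * (s * y))‖ ^ 2
      ≤ (∑ x ∈ A, ‖∑ y ∈ A, ψ (x * (s * y))‖) ^ 2 := by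
        apply pow_le_pow_left₀ (norm_nonneg _) h1
    _ ≤ (#A : ℝ) * ∑ x ∈ A, ‖∑ y ∈ A, ψ (x * (s * y))‖ ^ 2 := h2
    _ ≤ (#A : ℝ) * ∑ x : F, ‖∑ y ∈ A, ψ (x * (s * y))‖ ^ 2 := by
        apply mul_le_mul_of_nonneg_left h3 (by positivity)
    _ = (#A : ℝ) * ((Fintype.card F : ℝ) * #A) := by rw [h4, h5, aux_diag]
    _ = (Fintype.card F : ℝ) * (#A : ℝ) ^ 2 := by ring

-- energy as sum of squares of fiber counts
lemma aux_energy_eq {γ F : Type*} [DecidableEq γ] [DecidableEq F] (P : Finset γ) (f : γ → F) :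
    #((P ×ˢ P).filter fun z => f z.1 = f z.2)
      = ∑ t ∈ P.image f, #(P.filter fun p => f p = t) ^ 2 := by
  rw [Finset.card_filter, Finset.sum_product]
  calc (∑ p ∈ P, ∑ r ∈ P, if f (p, r).1 = f (p, r).2 then 1 else 0)
      = ∑ p ∈ P, #(P.filter fun r => f r = f p) := by
        refine Finset.sum_congr rfl fun p _ => ?_
        rw [Finset.card_filter]
        exact Finset.sum_congr rfl fun r _ => by simp [eq_comm]
    _ = ∑ t ∈ P.image f, ∑ p ∈ P.filter fun p => f p = t, #(P.filter fun r => f r = f p) := by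
        rw [Finset.sum_fiberwise_of_maps_to (fun p hp => Finset.mem_image_of_mem f hp)]
    _ = ∑ t ∈ P.image f, #(P.filter fun p => f p = t) ^ 2 := by
        refine Finset.sum_congr rfl fun t _ => ?_
        have h1 : ∀ p ∈ P.filter fun p => f p = t,
            #(P.filter fun r => f r = f p) = #(P.filter fun p => f p = t) := by
          intro p hp
          rw [Finset.mem_filter] at hp
          rw [hp.2]
        rw [Finset.sum_congr rfl h1, Finset.sum_const, smul_eq_mul, sq]

-- bound on the multiplicative energy-type count e
lemma aux_e_bound {F : Type*} [Field F] [DecidableEq F] (A : Finset F) :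
    (#(((A ×ˢ A) ×ˢ (A ×ˢ A)).filter fun z => z.1.1 * z.1.2 = z.2.1 * z.2.2) : ℝ)
      ≤ (#A : ℝ) ^ 3 + (#A : ℝ) ^ 2 := by
  classical
  set n : ℝ := (#A : ℝ) with hn
  have hn0 : (0:ℝ) ≤ n := Nat.cast_nonneg _
  set r : F → ℕ := fun t => #((A ×ˢ A).filter fun z => z.1 * z.2 = t) with hr
  -- e as a sum over the first pair
  have he : #(((A ×ˢ A) ×ˢ (A ×ˢ A)).filter fun z => z.1.1 * z.1.2 = z.2.1 * z.2.2)
      = ∑ w ∈ A ×ˢ A, r (w.1 * w.2) := by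
    rw [Finset.card_filter, Finset.sum_product]
    refine Finset.sum_congr rfl fun w _ => ?_
    show _ = #((A ×ˢ A).filter fun z => z.1 * z.2 = w.1 * w.2)
    rw [Finset.card_filter]
    exact Finset.sum_congr rfl fun v _ => by simp [eq_comm]
  -- fiber bounds
  have hrt : ∀ t : F, t ≠ 0 → r t ≤ #A := by
    intro t ht
    refine Finset.card_le_card_of_injOn (fun z => z.1) ?_ ?_
    · intro z hz
      rw [Finset.mem_coe, Finset.mem_filter, Finset.mem_product] at hz
      exact hz.1.1
    · intro z hz w hw hzw
      rw [Finset.coe_filter, Set.mem_setOf_eq] at hz hw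
      have hzw' : z.1 = w.1 := hzw
      have hz1 : z.1 ≠ 0 := fun h => ht (by rw [← hz.2, h, zero_mul])
      have : z.1 * z.2 = z.1 * w.2 := by rw [hz.2, hzw', hw.2]
      have h2 : z.2 = w.2 := mul_left_cancel₀ hz1 this
      exact Prod.ext hzw' h2
  by_cases h0 : (0:F) ∈ A
  · -- refined bounds
    have hrt' : ∀ t : F, t ≠ 0 → (r t : ℝ) ≤ n - 1 := by
      intro t ht
      have : r t ≤ #(A.erase 0) := by
        refine Finset.card_le_card_of_injOn (fun z => z.1) ?_ ?_
        · intro z hz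
          rw [Finset.mem_coe, Finset.mem_filter, Finset.mem_product] at hz
          refine Finset.mem_erase.mpr ⟨fun h => ht (by rw [← hz.2, show z.1 = (0:F) from h, zero_mul]), hz.1.1⟩
        · intro z hz w hw hzw
          rw [Finset.coe_filter, Set.mem_setOf_eq] at hz hw
          have hzw' : z.1 = w.1 := hzw
          have hz1 : z.1 ≠ 0 := fun h => ht (by rw [← hz.2, h, zero_mul])
          have : z.1 * z.2 = z.1 * w.2 := by rw [hz.2, hzw', hw.2]
          exact Prod.ext hzw' (mul_left_cancel₀ hz1 this)
      have h1 : (1:ℕ) ≤ #A := Finset.card_pos.mpr ⟨0, h0⟩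
      calc (r t : ℝ) ≤ (#(A.erase 0) : ℝ) := by exact_mod_cast this
        _ = n - 1 := by rw [Finset.card_erase_of_mem h0]; push_cast [h1]; ring
    have hr0 : (r 0 : ℝ) ≤ 2 * n - 1 := by
      have hsub : ((A ×ˢ A).filter fun z => z.1 * z.2 = 0)
          ⊆ ({(0:F)} ×ˢ A) ∪ ((A.erase 0) ×ˢ {(0:F)}) := by
        intro z hz
        rw [Finset.mem_filter, Finset.mem_product] at hz
        rcases mul_eq_zero.mp hz.2 with h | h
        · exact Finset.mem_union_left _ (Finset.mem_product.mpr ⟨by simp [h], hz.1.2⟩)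
        · by_cases hz1 : z.1 = 0
          · exact Finset.mem_union_left _ (Finset.mem_product.mpr ⟨by simp [hz1], hz.1.2⟩)
          · exact Finset.mem_union_right _
              (Finset.mem_product.mpr ⟨Finset.mem_erase.mpr ⟨hz1, hz.1.1⟩, by simp [h]⟩)
      have h1 : (1:ℕ) ≤ #A := Finset.card_pos.mpr ⟨0, h0⟩
      have h2 : r 0 ≤ #A + (#A - 1) := by
        have e1 : #(({(0:F)} : Finset F) ×ˢ A) = #A := by
          rw [Finset.card_product, Finset.card_singleton, one_mul]
        have e2 : #((A.erase 0) ×ˢ ({(0:F)} : Finset F)) = #A - 1 := by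
          rw [Finset.card_product, Finset.card_singleton, mul_one, Finset.card_erase_of_mem h0]
        calc r 0 ≤ _ := (Finset.card_le_card hsub).trans (Finset.card_union_le _ _)
          _ = #A + (#A - 1) := by rw [e1, e2]
      calc (r 0 : ℝ) ≤ ((#A + (#A - 1) : ℕ) : ℝ) := by exact_mod_cast h2
        _ = 2 * n - 1 := by push_cast [h1]; ring
    have hr0' : (0:ℝ) ≤ (r 0 : ℝ) := Nat.cast_nonneg _
    have hn1 : (1:ℝ) ≤ n := by
      have h1 : (1:ℕ) ≤ #A := Finset.card_pos.mpr ⟨0, h0⟩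
      rw [hn]
      exact_mod_cast h1
    set Z := (A ×ˢ A).filter (fun w => w.1 * w.2 = 0) with hZ
    set M := (A ×ˢ A).filter (fun w => ¬ w.1 * w.2 = 0) with hM
    have hcards : #Z + #M = #A * #A := by
      rw [hZ, hM, Finset.card_filter_add_card_filter_not, Finset.card_product]
    have hZr0 : #Z = r 0 := rfl
    have hsplit : ∑ w ∈ A ×ˢ A, (r (w.1 * w.2) : ℝ)
        = ∑ w ∈ Z, (r (w.1 * w.2) : ℝ) + ∑ w ∈ M, (r (w.1 * w.2) : ℝ) :=
      (Finset.sum_filter_add_sum_filter_not _ _ _).symm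
    have hsum1 : ∑ w ∈ Z, (r (w.1 * w.2) : ℝ) = (r 0 : ℝ) * (r 0 : ℝ) := by
      have hc : ∀ w ∈ Z, (r (w.1 * w.2) : ℝ) = (r 0 : ℝ) := by
        intro w hw
        rw [hZ, Finset.mem_filter] at hw
        rw [hw.2]
      rw [Finset.sum_congr rfl hc, Finset.sum_const, nsmul_eq_mul, hZr0]
    have hsum2 : ∑ w ∈ M, (r (w.1 * w.2) : ℝ) ≤ (#M : ℝ) * (n - 1) := by
      have hle : ∀ w ∈ M, (r (w.1 * w.2) : ℝ) ≤ n - 1 := by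
        intro w hw
        rw [hM, Finset.mem_filter] at hw
        exact hrt' _ hw.2
      calc ∑ w ∈ M, (r (w.1 * w.2) : ℝ) ≤ ∑ w ∈ M, (n - 1) := Finset.sum_le_sum hle
        _ = (#M : ℝ) * (n - 1) := by rw [Finset.sum_const, nsmul_eq_mul]
    have hMcard : (#M : ℝ) = n ^ 2 - (r 0 : ℝ) := by
      have : (#Z : ℝ) + (#M : ℝ) = n * n := by rw [hn]; exact_mod_cast hcards
      rw [hZr0] at this
      nlinarith [this]
    have hM0 : (0:ℝ) ≤ (#M : ℝ) := Nat.cast_nonneg _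
    calc (#(((A ×ˢ A) ×ˢ (A ×ˢ A)).filter fun z => z.1.1 * z.1.2 = z.2.1 * z.2.2) : ℝ)
        = ∑ w ∈ A ×ˢ A, (r (w.1 * w.2) : ℝ) := by rw [he]; push_cast; rfl
      _ = (r 0 : ℝ) * (r 0 : ℝ) + ∑ w ∈ M, (r (w.1 * w.2) : ℝ) := by rw [hsplit, hsum1]
      _ ≤ (r 0 : ℝ) * (r 0 : ℝ) + (#M : ℝ) * (n - 1) := by linarith
      _ ≤ n ^ 3 + n ^ 2 := by
          rw [hMcard]
          nlinarith [mul_nonneg (sub_nonneg.mpr hr0) hr0', mul_nonneg (sub_nonneg.mpr hr0) hn0]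
  · -- no zero in A
    have hall : ∀ w ∈ A ×ˢ A, (r (w.1 * w.2) : ℝ) ≤ n := by
      intro w hw
      rw [Finset.mem_product] at hw
      have h1 : w.1 ≠ 0 := fun h => h0 (h ▸ hw.1)
      have h2 : w.2 ≠ 0 := fun h => h0 (h ▸ hw.2)
      rw [hn]; exact_mod_cast hrt _ (mul_ne_zero h1 h2)
    calc (#(((A ×ˢ A) ×ˢ (A ×ˢ A)).filter fun z => z.1.1 * z.1.2 = z.2.1 * z.2.2) : ℝ)
        = ∑ w ∈ A ×ˢ A, (r (w.1 * w.2) : ℝ) := by rw [he]; push_cast; rfl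
      _ ≤ ∑ w ∈ A ×ˢ A, n := Finset.sum_le_sum hall
      _ = n ^ 2 * n := by rw [Finset.sum_const, Finset.card_product]; push_cast; ring
      _ ≤ n ^ 3 + n ^ 2 := by nlinarith

-- the core energy estimate
set_option maxHeartbeats 1000000 in
lemma aux_energy_le {F : Type*} [Field F] [Fintype F] [DecidableEq F] (A : Finset F)
    {d : ℕ} (hd1 : 1 ≤ d)
    (hq : (Fintype.card F : ℝ) ≤ (#A : ℝ) ^ 2) :
    (Fintype.card F : ℝ) *
        #((((Fintype.piFinset fun _ : Fin d => A) ×ˢ (Fintype.piFinset fun _ : Fin d => A))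
            ×ˢ ((Fintype.piFinset fun _ : Fin d => A) ×ˢ (Fintype.piFinset fun _ : Fin d => A))).filter
          fun z => (∑ i, z.1.1 i * z.1.2 i) = ∑ i, z.2.1 i * z.2.2 i)
      ≤ (#A : ℝ) ^ (4 * d) + (Fintype.card F : ℝ) ^ d * (#A : ℝ) ^ (2 * d + 1) := by
  obtain ⟨k, rfl⟩ : ∃ k, d = k + 1 := ⟨d - 1, (Nat.succ_pred_eq_of_pos hd1).symm⟩
  set ψ : AddChar F ℂ := AddChar.FiniteField.primitiveChar_to_Complex F with hψdef
  have hψ : ψ.IsPrimitive := AddChar.FiniteField.primitiveChar_to_Complex_isPrimitive F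
  set Q : ℝ := (Fintype.card F : ℝ) with hQ
  set n : ℝ := (#A : ℝ) with hn
  have hn0 : (0:ℝ) ≤ n := Nat.cast_nonneg _
  have hQ0 : (0:ℝ) < Q := by
    rw [hQ]; exact_mod_cast Fintype.card_pos
  set B : Finset (Fin (k + 1) → F) := Fintype.piFinset fun _ : Fin (k + 1) => A with hB
  set P : Finset ((Fin (k + 1) → F) × (Fin (k + 1) → F)) := B ×ˢ B with hP
  -- Parseval for the dot-product count
  have hPar1 : ∑ s : F, ‖∑ z ∈ P, ψ (s * ∑ i, z.1 i * z.2 i)‖ ^ 2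
      = Q * #((P ×ˢ P).filter fun z =>
          (∑ i, z.1.1 i * z.1.2 i) = ∑ i, z.2.1 i * z.2.2 i) :=
    aux_parseval hψ P (fun p => ∑ i, p.1 i * p.2 i)
  -- Parseval for the product count
  have hPar2 : ∑ s : F, ‖∑ z ∈ A ×ˢ A, ψ (s * (z.1 * z.2))‖ ^ 2
      = Q * #(((A ×ˢ A) ×ˢ (A ×ˢ A)).filter fun z => z.1.1 * z.1.2 = z.2.1 * z.2.2) :=
    aux_parseval hψ (A ×ˢ A) (fun z => z.1 * z.2)
  -- value at s = 0
  have hW0 : ∑ z ∈ A ×ˢ A, ψ ((0:F) * (z.1 * z.2)) = ((n : ℂ)) ^ 2 := by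
    have : ∀ z ∈ A ×ˢ A, ψ ((0:F) * (z.1 * z.2)) = 1 := by
      intro z _; rw [zero_mul, AddChar.map_zero_eq_one]
    rw [Finset.sum_congr rfl this, Finset.sum_const, Finset.card_product, nsmul_eq_mul, mul_one]
    push_cast [hn]
    ring
  have hT0 : ‖∑ z ∈ P, ψ ((0:F) * ∑ i, z.1 i * z.2 i)‖ ^ 2 = n ^ (4 * (k + 1)) := by
    have h1 : ∀ z ∈ P, ψ ((0:F) * ∑ i, z.1 i * z.2 i) = 1 := by
      intro z _; rw [zero_mul, AddChar.map_zero_eq_one]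
    have hcard : #P = #A ^ (k + 1) * #A ^ (k + 1) := by
      rw [hP, Finset.card_product, hB, Fintype.card_piFinset]
      simp
    rw [Finset.sum_congr rfl h1, Finset.sum_const, nsmul_eq_mul, mul_one, hcard,
      Complex.norm_natCast, hn]
    push_cast
    ring
  -- the erase-0 splitting for both sums
  have hsplitT : ∑ s : F, ‖∑ z ∈ P, ψ (s * ∑ i, z.1 i * z.2 i)‖ ^ 2
      = n ^ (4 * (k + 1)) + ∑ s ∈ Finset.univ.erase 0, ‖∑ z ∈ P, ψ (s * ∑ i, z.1 i * z.2 i)‖ ^ 2 := by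
    rw [← Finset.add_sum_erase Finset.univ _ (Finset.mem_univ (0:F)), hT0]
  have hsplitW : ∑ s : F, ‖∑ z ∈ A ×ˢ A, ψ (s * (z.1 * z.2))‖ ^ 2
      = n ^ 4 + ∑ s ∈ Finset.univ.erase 0, ‖∑ z ∈ A ×ˢ A, ψ (s * (z.1 * z.2))‖ ^ 2 := by
    rw [← Finset.add_sum_erase Finset.univ _ (Finset.mem_univ (0:F)), hW0]
    have hnorm : ‖((n:ℂ)) ^ 2‖ ^ 2 = n ^ 4 := by
      rw [norm_pow, Complex.norm_real, Real.norm_of_nonneg hn0]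
      ring
    rw [hnorm]
  -- factorization and pointwise bound on erase
  have hterm : ∀ s ∈ Finset.univ.erase (0:F),
      ‖∑ z ∈ P, ψ (s * ∑ i, z.1 i * z.2 i)‖ ^ 2
        ≤ (Q * n ^ 2) ^ k * ‖∑ z ∈ A ×ˢ A, ψ (s * (z.1 * z.2))‖ ^ 2 := by
    intro s hs
    have hs0 : s ≠ 0 := Finset.ne_of_mem_erase hs
    have hfac : ∑ z ∈ P, ψ (s * ∑ i, z.1 i * z.2 i)
        = (∑ z ∈ A ×ˢ A, ψ (s * (z.1 * z.2))) ^ (k + 1) := aux_factor ψ A (k + 1) s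
    rw [hfac, norm_pow]
    have hb : ‖∑ z ∈ A ×ˢ A, ψ (s * (z.1 * z.2))‖ ^ 2 ≤ Q * n ^ 2 := by
      rw [hQ, hn]; exact aux_W_bound hψ A hs0
    calc (‖∑ z ∈ A ×ˢ A, ψ (s * (z.1 * z.2))‖ ^ (k + 1)) ^ 2
        = (‖∑ z ∈ A ×ˢ A, ψ (s * (z.1 * z.2))‖ ^ 2) ^ k
            * ‖∑ z ∈ A ×ˢ A, ψ (s * (z.1 * z.2))‖ ^ 2 := by
          rw [← pow_succ, ← pow_mul, ← pow_mul]
          congr 1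
          omega
      _ ≤ (Q * n ^ 2) ^ k * ‖∑ z ∈ A ×ˢ A, ψ (s * (z.1 * z.2))‖ ^ 2 :=
          mul_le_mul_of_nonneg_right (pow_le_pow_left₀ (sq_nonneg _) hb k) (sq_nonneg _)
  -- sum over erase bound
  have hsum_erase : ∑ s ∈ Finset.univ.erase 0, ‖∑ z ∈ P, ψ (s * ∑ i, z.1 i * z.2 i)‖ ^ 2
      ≤ (Q * n ^ 2) ^ k *
        ∑ s ∈ Finset.univ.erase 0, ‖∑ z ∈ A ×ˢ A, ψ (s * (z.1 * z.2))‖ ^ 2 := by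
    rw [Finset.mul_sum]
    exact Finset.sum_le_sum hterm
  -- the W erase sum equals Q*e - n^4, bounded by Q*n^3
  have he_bound : (#(((A ×ˢ A) ×ˢ (A ×ˢ A)).filter
      fun z => z.1.1 * z.1.2 = z.2.1 * z.2.2) : ℝ) ≤ n ^ 3 + n ^ 2 := aux_e_bound A
  have hWsum : ∑ s ∈ Finset.univ.erase 0, ‖∑ z ∈ A ×ˢ A, ψ (s * (z.1 * z.2))‖ ^ 2
      ≤ Q * n ^ 3 := by
    have h1 : ∑ s ∈ Finset.univ.erase 0, ‖∑ z ∈ A ×ˢ A, ψ (s * (z.1 * z.2))‖ ^ 2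
        = Q * #(((A ×ˢ A) ×ˢ (A ×ˢ A)).filter fun z => z.1.1 * z.1.2 = z.2.1 * z.2.2)
          - n ^ 4 := by
      rw [← hPar2]
      linarith [hsplitW]
    rw [h1]
    calc Q * (#(((A ×ˢ A) ×ˢ (A ×ˢ A)).filter fun z => z.1.1 * z.1.2 = z.2.1 * z.2.2) : ℝ) - n ^ 4
        ≤ Q * (n^3 + n^2) - n^4 := by nlinarith [he_bound, hQ0]
      _ ≤ Q * n^3 := by nlinarith [hq, hQ0]
  -- put it together
  rw [← hPar1, hsplitT]
  have hfinal : (Q * n ^ 2) ^ k * (Q * n ^ 3) = Q ^ (k + 1) * n ^ (2 * (k + 1) + 1) := by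
    rw [mul_pow, ← pow_mul]
    rw [show 2 * (k + 1) + 1 = 2 * k + 3 from by omega, pow_succ]
    ring
  calc n ^ (4 * (k + 1)) + ∑ s ∈ Finset.univ.erase 0, ‖∑ z ∈ P, ψ (s * ∑ i, z.1 i * z.2 i)‖ ^ 2
      ≤ n ^ (4 * (k + 1)) + (Q * n ^ 2) ^ k *
          ∑ s ∈ Finset.univ.erase 0, ‖∑ z ∈ A ×ˢ A, ψ (s * (z.1 * z.2))‖ ^ 2 := by
        linarith [hsum_erase]
    _ ≤ n ^ (4 * (k + 1)) + (Q * n ^ 2) ^ k * (Q * n ^ 3) := by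
        have hk0 : (0:ℝ) ≤ (Q * n ^ 2) ^ k := pow_nonneg (mul_nonneg hQ0.le (sq_nonneg n)) k
        nlinarith [mul_le_mul_of_nonneg_left hWsum hk0]
    _ = n ^ (4 * (k + 1)) + Q ^ (k + 1) * n ^ (2 * (k + 1) + 1) := by rw [hfinal]

/-- If `|A| ≥ C^(1/d) · q^(1/2+ε)` where `C ≥ 1` and `d` is the smallest positive
integer with `d ≥ 1/2 + 1/(4ε)`, then `|dA²| ≥ q · C^(2-1/d) / (C^(2-1/d) + 1)`. -/
theorem stmt_5 {F : Type*} [Field F] [Fintype F] (ε : ℝ) (hε : 0 < ε)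
    (C : ℝ) (hC : 1 ≤ C)
    (d : ℕ) (hd : d = max 1 ⌈(1 : ℝ) / 2 + 1 / (4 * ε)⌉₊)
    (A : Finset F)
    (hA : (A.card : ℝ) ≥ C ^ ((1 : ℝ) / d) * (Fintype.card F : ℝ) ^ ((1 : ℝ) / 2 + ε)) :
    (Set.ncard {t : F | ∃ a a' : Fin d → F, (∀ i, a i ∈ A) ∧ (∀ i, a' i ∈ A) ∧
        t = ∑ i, a i * a' i} : ℝ) ≥
      (Fintype.card F : ℝ) * C ^ ((2 : ℝ) - 1 / d) / (C ^ ((2 : ℝ) - 1 / d) + 1) := by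
  haveI : DecidableEq F := Classical.decEq F
  have hd1 : 1 ≤ d := by rw [hd]; exact le_max_left 1 _
  have hdR : (1:ℝ) ≤ (d:ℝ) := by exact_mod_cast hd1
  have hd0 : (d:ℝ) ≠ 0 := by positivity
  set Q : ℝ := (Fintype.card F : ℝ) with hQ
  have hQ1 : (1:ℝ) ≤ Q := by rw [hQ]; exact_mod_cast Fintype.card_pos
  have hQ0 : (0:ℝ) < Q := lt_of_lt_of_le one_pos hQ1
  have hC0 : (0:ℝ) < C := lt_of_lt_of_le one_pos hC
  set n : ℝ := (#A : ℝ) with hn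
  set K : ℝ := C ^ ((2:ℝ) - 1 / d) with hK
  have hK1 : (1:ℝ) ≤ K := by
    rw [hK]
    refine Real.one_le_rpow hC ?_
    have : 1 / (d:ℝ) ≤ 1 := by
      rw [div_le_one (by positivity)]; exact hdR
    linarith
  have hK0 : (0:ℝ) < K := lt_of_lt_of_le one_pos hK1
  -- lower bounds on n
  have hCd1 : (1:ℝ) ≤ C ^ ((1:ℝ) / d) := Real.one_le_rpow hC (by positivity)
  have hQe0 : (0:ℝ) ≤ Q ^ ((1:ℝ)/2 + ε) := Real.rpow_nonneg hQ0.le _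
  have hnq : Q ^ ((1:ℝ)/2 + ε) ≤ n := by
    calc Q ^ ((1:ℝ)/2 + ε) = 1 * Q ^ ((1:ℝ)/2 + ε) := (one_mul _).symm
      _ ≤ C ^ ((1:ℝ) / d) * Q ^ ((1:ℝ)/2 + ε) := by
          exact mul_le_mul_of_nonneg_right hCd1 hQe0
      _ ≤ n := hA
  have hnpos : (0:ℝ) < n := lt_of_lt_of_le (Real.rpow_pos_of_pos hQ0 _) hnq
  have hApos : 0 < #A := by rw [hn] at hnpos; exact_mod_cast hnpos
  obtain ⟨a0, ha0⟩ := Finset.card_pos.mp hApos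
  -- n^2 ≥ Q
  have hn2 : Q ≤ n ^ 2 := by
    have h1 : Q ^ (1:ℝ) ≤ Q ^ (((1:ℝ)/2 + ε) * 2) :=
      Real.rpow_le_rpow_of_exponent_le hQ1 (by linarith)
    have h2 : Q ^ (((1:ℝ)/2 + ε) * 2) = (Q ^ ((1:ℝ)/2 + ε)) ^ (2:ℕ) := by
      rw [← Real.rpow_natCast (Q ^ ((1:ℝ)/2 + ε)) 2, ← Real.rpow_mul hQ0.le]
      norm_num
    calc Q = Q ^ (1:ℝ) := (Real.rpow_one Q).symm
      _ ≤ (Q ^ ((1:ℝ)/2 + ε)) ^ (2:ℕ) := by rw [← h2]; exact h1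
      _ ≤ n ^ 2 := pow_le_pow_left₀ hQe0 hnq 2
  -- exponent inequality
  have hd2 : (1:ℝ)/2 + 1/(4*ε) ≤ (d:ℝ) := by
    rw [hd]
    push_cast [Nat.cast_max]
    exact le_max_of_le_right (Nat.le_ceil _)
  have hexp : (d:ℝ) ≤ ((1:ℝ)/2 + ε) * (2*(d:ℝ) - 1) := by
    have h4 : ε * (1/(4*ε)) = 1/4 := by field_simp
    nlinarith [mul_le_mul_of_nonneg_left hd2 hε.le]
  -- key inequality K * Q^d ≤ n^(2d-1)
  have hKey : K * Q ^ d ≤ n ^ (2*d - 1) := by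
    have hm : ((2*d - 1 : ℕ) : ℝ) = 2*(d:ℝ) - 1 := by
      push_cast [Nat.cast_sub (by omega : 1 ≤ 2*d)]
      try ring
    have h1 : (C ^ ((1:ℝ) / d) * Q ^ ((1:ℝ)/2 + ε)) ^ ((2*d - 1 : ℕ) : ℝ)
        ≤ n ^ ((2*d - 1 : ℕ) : ℝ) :=
      Real.rpow_le_rpow (by positivity) hA.le (by positivity)
    have h2 : (C ^ ((1:ℝ) / d) * Q ^ ((1:ℝ)/2 + ε)) ^ ((2*d - 1 : ℕ) : ℝ)
        = C ^ (((1:ℝ)/d) * (2*(d:ℝ) - 1)) * Q ^ (((1:ℝ)/2 + ε) * (2*(d:ℝ) - 1)) := by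
      rw [hm, Real.mul_rpow (by positivity) hQe0, ← Real.rpow_mul hC0.le,
        ← Real.rpow_mul hQ0.le]
    have h3 : ((1:ℝ)/d) * (2*(d:ℝ) - 1) = (2:ℝ) - 1 / d := by
      field_simp
      try ring
    have h4 : Q ^ ((d:ℕ):ℝ) ≤ Q ^ (((1:ℝ)/2 + ε) * (2*(d:ℝ) - 1)) :=
      Real.rpow_le_rpow_of_exponent_le hQ1 hexp
    have key2 : K * Q ^ ((d:ℕ):ℝ) ≤ n ^ ((2*d - 1 : ℕ) : ℝ) := by
      calc K * Q ^ ((d:ℕ):ℝ)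
          ≤ K * Q ^ (((1:ℝ)/2 + ε) * (2*(d:ℝ) - 1)) :=
            mul_le_mul_of_nonneg_left h4 hK0.le
        _ = C ^ (((1:ℝ)/d) * (2*(d:ℝ) - 1)) * Q ^ (((1:ℝ)/2 + ε) * (2*(d:ℝ) - 1)) := by
            rw [hK, ← h3]
        _ = (C ^ ((1:ℝ) / d) * Q ^ ((1:ℝ)/2 + ε)) ^ ((2*d - 1 : ℕ) : ℝ) := h2.symm
        _ ≤ n ^ ((2*d - 1 : ℕ) : ℝ) := h1
    rw [Real.rpow_natCast, Real.rpow_natCast] at key2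
    exact key2
  -- combinatorial part
  set B : Finset (Fin d → F) := Fintype.piFinset fun _ : Fin d => A with hB
  set P : Finset ((Fin d → F) × (Fin d → F)) := B ×ˢ B with hP
  set dotf : (Fin d → F) × (Fin d → F) → F := fun p => ∑ i, p.1 i * p.2 i with hdot
  set I : Finset F := P.image dotf with hI
  -- goal set is the coercion of I
  have hset : {t : F | ∃ a a' : Fin d → F, (∀ i, a i ∈ A) ∧ (∀ i, a' i ∈ A) ∧
      t = ∑ i, a i * a' i} = ↑I := by
    ext t
    simp only [Set.mem_setOf_eq, Finset.coe_image, Set.mem_image, Finset.mem_coe, hI, hP, hB]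
    constructor
    · rintro ⟨a, a', h1, h2, rfl⟩
      refine ⟨(a, a'), ?_, rfl⟩
      rw [Finset.mem_product]
      exact ⟨Fintype.mem_piFinset.mpr h1, Fintype.mem_piFinset.mpr h2⟩
    · rintro ⟨p, hp, rfl⟩
      rw [Finset.mem_product] at hp
      exact ⟨p.1, p.2, Fintype.mem_piFinset.mp hp.1, Fintype.mem_piFinset.mp hp.2, rfl⟩
  rw [hset, Set.ncard_coe_finset]
  -- cardinality of P
  have hcardP : (#P : ℝ) = n ^ (2*d) := by
    rw [hP, Finset.card_product, hB, Fintype.card_piFinset]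
    simp only [Finset.prod_const, Finset.card_univ, Fintype.card_fin]
    rw [hn]
    push_cast
    rw [← pow_add]
    congr 1
    omega
  -- energy, as a real number
  set E : ℝ := (#((P ×ˢ P).filter fun z => dotf z.1 = dotf z.2) : ℝ) with hE
  -- energy bound from Fourier analysis
  have hEle : Q * E ≤ n ^ (4*d) + Q ^ d * n ^ (2*d + 1) := by
    have := aux_energy_le A hd1 hn2
    exact this
  -- energy = sum of squares of fibers
  have hEeq : E = ∑ t ∈ I, (#(P.filter fun p => dotf p = t) : ℝ) ^ 2 := by
    rw [hE, aux_energy_eq P dotf]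
    push_cast
    rfl
  -- Cauchy-Schwarz
  have hfib : #P = ∑ t ∈ I, #(P.filter fun p => dotf p = t) :=
    Finset.card_eq_sum_card_fiberwise fun p hp => Finset.mem_image_of_mem dotf hp
  have hCS : (#P : ℝ) ^ 2 ≤ (#I : ℝ) * E := by
    rw [hEeq]
    have h1 : ((∑ t ∈ I, #(P.filter fun p => dotf p = t) : ℕ) : ℝ) ^ 2
        ≤ (#I : ℝ) * ∑ t ∈ I, (#(P.filter fun p => dotf p = t) : ℝ) ^ 2 := by
      push_cast
      exact sq_sum_le_card_mul_sum_sq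
    rw [hfib]
    exact_mod_cast h1
  have hCS' : n ^ (4*d) ≤ (#I : ℝ) * E := by
    have : (#P : ℝ) ^ 2 = n ^ (4*d) := by
      rw [hcardP, ← pow_mul]
      congr 1
      omega
    rw [← this]
    exact hCS
  -- energy is positive
  have hEpos : (0:ℝ) < E := by
    have hp0 : ((fun _ => a0, fun _ => a0) : (Fin d → F) × (Fin d → F)) ∈ P := by
      rw [hP, Finset.mem_product]
      constructor <;> exact Fintype.mem_piFinset.mpr fun _ => ha0
    have hmem : (((fun _ => a0, fun _ => a0), ((fun _ => a0, fun _ => a0))) :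
        ((Fin d → F) × (Fin d → F)) × ((Fin d → F) × (Fin d → F)))
        ∈ (P ×ˢ P).filter fun z => dotf z.1 = dotf z.2 := by
      rw [Finset.mem_filter, Finset.mem_product]
      exact ⟨⟨hp0, hp0⟩, rfl⟩
    have : 0 < #((P ×ˢ P).filter fun z => dotf z.1 = dotf z.2) :=
      Finset.card_pos.mpr ⟨_, hmem⟩
    rw [hE]
    exact_mod_cast this
  -- put the analytic bounds together: K * (Q * E) ≤ (K+1) * n^(4d)
  have hn4pos : (0:ℝ) < n ^ (4*d) := pow_pos hnpos _
  have hmain : K * (Q * E) ≤ (K + 1) * n ^ (4*d) := by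
    have h1 : K * (Q ^ d * n ^ (2*d + 1)) ≤ n ^ (4*d) := by
      have h2 : K * Q ^ d * n ^ (2*d+1) ≤ n ^ (2*d-1) * n ^ (2*d+1) :=
        mul_le_mul_of_nonneg_right hKey (pow_nonneg hnpos.le _)
      have h3 : n ^ (2*d-1) * n ^ (2*d+1) = n ^ (4*d) := by
        rw [← pow_add]
        congr 1
        omega
      calc K * (Q ^ d * n ^ (2*d+1)) = K * Q ^ d * n ^ (2*d+1) := by ring
        _ ≤ n ^ (2*d-1) * n ^ (2*d+1) := h2
        _ = n ^ (4*d) := h3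
    calc K * (Q * E) ≤ K * (n ^ (4*d) + Q ^ d * n ^ (2*d + 1)) :=
          mul_le_mul_of_nonneg_left hEle hK0.le
      _ = K * n ^ (4*d) + K * (Q ^ d * n ^ (2*d+1)) := by ring
      _ ≤ K * n ^ (4*d) + n ^ (4*d) := by linarith
      _ = (K + 1) * n ^ (4*d) := by ring
  -- conclude: Q * K ≤ #I * (K + 1)
  have hfinal : Q * K ≤ (#I : ℝ) * (K + 1) := by
    have h1 : Q * K * n ^ (4*d) ≤ (#I : ℝ) * (K + 1) * n ^ (4*d) := by
      calc Q * K * n ^ (4*d) ≤ Q * K * ((#I : ℝ) * E) := by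
            have := mul_le_mul_of_nonneg_left hCS' (mul_nonneg hQ0.le hK0.le)
            linarith
        _ = (#I : ℝ) * (K * (Q * E)) := by ring
        _ ≤ (#I : ℝ) * ((K + 1) * n ^ (4*d)) :=
            mul_le_mul_of_nonneg_left hmain (Nat.cast_nonneg _)
        _ = (#I : ℝ) * (K + 1) * n ^ (4*d) := by ring
    exact le_of_mul_le_mul_right h1 hn4pos
  rw [ge_iff_le, div_le_iff₀ (by linarith : (0:ℝ) < K + 1)]
  linarith
end

section
/- Let q be a prime power, F_q the finite field with q elements, and d a positive integer. Let E ⊆ F_q^d satisfy |E| > q^((d+1)/2). Then every nonzero element t of F_q can be written as t = x·y for some x, y ∈ E, i.e., F_q \ {0} ⊆ {x·y : x, y ∈ E}. -/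
open Finset

section Aux

variable {F : Type*} [Field F] [Fintype F] [DecidableEq F]

private lemma addchar_map_sum {M : Type*} [CommMonoid M] (χ : AddChar F M) {ι : Type*}
    (s : Finset ι) (f : ι → F) : χ (∑ i ∈ s, f i) = ∏ i ∈ s, χ (f i) := by
  classical
  induction s using Finset.induction with
  | empty => simp
  | insert _ _ h ih =>
      rw [Finset.sum_insert h, Finset.prod_insert h, AddChar.map_add_eq_mul, ih]

private lemma conj_addchar (χ : AddChar F ℂ) (a : F) :
    (starRingEnd ℂ) (χ a) = χ (-a) := by
  have h : 0 < ringChar F := Nat.pos_of_ne_zero (CharP.ringChar_ne_zero_of_finite F)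
  rw [AddChar.starComp_apply h, AddChar.inv_apply]

private lemma sum_erase_eq_neg_one {χ : AddChar F ℂ} (hχ : χ.IsPrimitive) {a : F} (ha : a ≠ 0) :
    ∑ s ∈ Finset.univ.erase (0 : F), χ (s * a) = -1 := by
  have h := AddChar.sum_mulShift a hχ
  rw [if_neg ha] at h
  have h2 : (∑ s : F, χ (s * a)) =
      χ (0 * a) + ∑ s ∈ Finset.univ.erase (0 : F), χ (s * a) :=
    (Finset.add_sum_erase _ _ (Finset.mem_univ 0)).symm
  simp only [zero_mul, AddChar.map_zero_eq_one] at h2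
  rw [h] at h2
  linear_combination -h2

private lemma sum_vec {χ : AddChar F ℂ} (hχ : χ.IsPrimitive) {d : ℕ} (v : Fin d → F) :
    ∑ x : Fin d → F, χ (∑ i, x i * v i) =
      if v = 0 then ((Fintype.card F : ℂ)) ^ d else 0 := by
  have key : ∑ x : Fin d → F, χ (∑ i, x i * v i) = ∏ i, ∑ s : F, χ (s * v i) := by
    rw [Finset.prod_univ_sum, ← Fintype.piFinset_univ]
    exact Finset.sum_congr rfl fun x _ => addchar_map_sum χ _ _
  rw [key]
  have hfac : ∀ i, (∑ s : F, χ (s * v i)) =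
      if v i = 0 then (Fintype.card F : ℂ) else 0 := by
    intro i
    rw [AddChar.sum_mulShift _ hχ]
    split_ifs <;> simp
  rw [Finset.prod_congr rfl fun i _ => hfac i]
  by_cases hv : v = 0
  · rw [if_pos hv]
    have : ∀ i, v i = 0 := fun i => by rw [hv]; rfl
    simp [this]
  · rw [if_neg hv]
    obtain ⟨i, hi⟩ : ∃ i, v i ≠ 0 := by
      by_contra hcc
      push_neg at hcc
      exact hv (funext hcc)
    exact Finset.prod_eq_zero (Finset.mem_univ i) (by rw [if_neg hi])

end Aux

set_option maxHeartbeats 1600000 in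
/-- If `E ⊆ F_q^d` with `|E| > q^((d+1)/2)`, then every nonzero `t ∈ F_q` is a dot
product of two elements of `E`. -/
theorem stmt_6 {F : Type*} [Field F] [Fintype F] (d : ℕ) (hd : 0 < d)
    (E : Finset (Fin d → F))
    (hE : (E.card : ℝ) > (Fintype.card F : ℝ) ^ (((d : ℝ) + 1) / 2)) :
    ∀ t : F, t ≠ 0 → ∃ x ∈ E, ∃ y ∈ E, t = ∑ i, x i * y i := by
  classical
  intro t ht
  by_contra hcon
  push_neg at hcon
  -- notation
  set q : ℕ := Fintype.card F with hqdef
  have hq1 : 1 < q := Fintype.one_lt_card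
  have hq0 : (0 : ℝ) < q := by positivity
  set χ : AddChar F ℂ := AddChar.FiniteField.primitiveChar_to_Complex F with hχdef
  have hχ : χ.IsPrimitive := AddChar.FiniteField.primitiveChar_to_Complex_isPrimitive F
  set A : Finset F := Finset.univ.erase (0 : F) with hAdef
  have hmemA : ∀ {s : F}, s ∈ A ↔ s ≠ 0 := by
    intro s; simp [hAdef]
  set f : (Fin d → F) → ℂ :=
    fun x => ∑ y ∈ E, ∑ s ∈ A, χ (s * ((∑ i, x i * y i) - t)) with hfdef
  -- Step 1: on E, f is constantly -|E|
  have hfE : ∀ x ∈ E, f x = -(E.card : ℂ) := by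
    intro x hx
    have : ∀ y ∈ E, (∑ s ∈ A, χ (s * ((∑ i, x i * y i) - t))) = -1 := by
      intro y hy
      exact sum_erase_eq_neg_one hχ (sub_ne_zero.mpr (Ne.symm (hcon x hx y hy)))
    rw [hfdef]
    simp only [Finset.sum_congr rfl this, Finset.sum_const, nsmul_eq_mul, mul_neg_one]
  have hsumE : (∑ x ∈ E, f x) = -((E.card : ℂ) * E.card) := by
    rw [Finset.sum_congr rfl hfE, Finset.sum_const, nsmul_eq_mul]
    ring
  -- the counting function
  set M : F → ℕ := fun l => (E.filter (fun y => l • y ∈ E)).card with hMdef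
  have hMle : ∀ l, (M l : ℝ) ≤ E.card := by
    intro l
    exact_mod_cast Nat.cast_le.mpr (Finset.card_filter_le _ _)
  have hfx : ∀ x, f x = ∑ s ∈ A, ∑ y ∈ E, χ (s * ((∑ i, x i * y i) - t)) := by
    intro x
    rw [hfdef]
    exact Finset.sum_comm
  -- Step 2: the big identity
  have key : (∑ x : Fin d → F, f x * (starRingEnd ℂ) (f x)) =
      (q : ℂ) ^ d * ∑ l ∈ A, (M l : ℂ) *
        (if l = 1 then ((q : ℂ) - 1) else -1) := by
    have hconj : ∀ x, (starRingEnd ℂ) (f x)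
        = ∑ s' ∈ A, ∑ y' ∈ E, χ (-(s' * ((∑ i, x i * y' i) - t))) := by
      intro x
      rw [hfx x]
      simp only [map_sum]
      exact sum_congr rfl fun s' _ => sum_congr rfl fun y' _ => conj_addchar χ _
    calc (∑ x : Fin d → F, f x * (starRingEnd ℂ) (f x))
        = ∑ x : Fin d → F, ∑ s ∈ A, ∑ s' ∈ A, ∑ y ∈ E, ∑ y' ∈ E,
            χ (s * ((∑ i, x i * y i) - t)) * χ (-(s' * ((∑ i, x i * y' i) - t))) := by
          refine sum_congr rfl fun x _ => ?_
          rw [hconj x, hfx x]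
          rw [Finset.sum_mul_sum]
          refine sum_congr rfl fun s _ => sum_congr rfl fun s' _ => ?_
          rw [Finset.sum_mul_sum]
      _ = ∑ s ∈ A, ∑ s' ∈ A, ∑ y ∈ E, ∑ y' ∈ E, ∑ x : Fin d → F,
            χ (s * ((∑ i, x i * y i) - t)) * χ (-(s' * ((∑ i, x i * y' i) - t))) := by
          rw [Finset.sum_comm]
          refine sum_congr rfl fun s _ => ?_
          rw [Finset.sum_comm]
          refine sum_congr rfl fun s' _ => ?_
          rw [Finset.sum_comm]
          refine sum_congr rfl fun y _ => ?_
          rw [Finset.sum_comm]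
      _ = ∑ s ∈ A, ∑ s' ∈ A, ∑ y ∈ E, ∑ y' ∈ E,
            χ (t * (s' - s)) *
              (if (fun i => s * y i - s' * y' i) = (0 : Fin d → F)
                then ((q : ℂ)) ^ d else 0) := by
          refine sum_congr rfl fun s hs => sum_congr rfl fun s' hs' =>
            sum_congr rfl fun y hy => sum_congr rfl fun y' hy' => ?_
          have hterm : ∀ x : Fin d → F,
              χ (s * ((∑ i, x i * y i) - t)) * χ (-(s' * ((∑ i, x i * y' i) - t)))
              = χ (t * (s' - s)) * χ (∑ i, x i * (s * y i - s' * y' i)) := by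
            intro x
            rw [← AddChar.map_add_eq_mul, ← AddChar.map_add_eq_mul]
            congr 1
            have expand : (∑ i, x i * (s * y i - s' * y' i))
                = s * (∑ i, x i * y i) - s' * (∑ i, x i * y' i) := by
              rw [Finset.mul_sum, Finset.mul_sum, ← Finset.sum_sub_distrib]
              exact sum_congr rfl fun i _ => by ring
            rw [expand]; ring
          rw [Finset.sum_congr rfl fun x _ => hterm x, ← Finset.mul_sum]
          congr 1
          exact sum_vec hχ _
      _ = ∑ s ∈ A, ∑ s' ∈ A, ((M (s * s'⁻¹) : ℂ)) * (χ (t * (s' - s)) * (q : ℂ) ^ d) := by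
          refine sum_congr rfl fun s hs => sum_congr rfl fun s' hs' => ?_
          have hs'0 : s' ≠ 0 := hmemA.mp hs'
          have hcond : ∀ y y' : Fin d → F,
              ((fun i => s * y i - s' * y' i) = (0 : Fin d → F)) ↔ y' = (s * s'⁻¹) • y := by
            intro y y'
            constructor
            · intro h
              funext i
              have h1 : s * y i - s' * y' i = 0 := congrFun h i
              have h2 : s' * y' i = s * y i := by linear_combination -h1
              show y' i = (s * s'⁻¹) * y i
              calc y' i = s'⁻¹ * (s' * y' i) := by field_simp
                _ = s'⁻¹ * (s * y i) := by rw [h2]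
                _ = (s * s'⁻¹) * y i := by ring
            · intro h
              funext i
              have h3 : y' i = (s * s'⁻¹) * y i := by rw [h]; rfl
              show s * y i - s' * y' i = 0
              rw [h3]
              field_simp
              ring
          calc ∑ y ∈ E, ∑ y' ∈ E, χ (t * (s' - s)) *
                  (if (fun i => s * y i - s' * y' i) = (0 : Fin d → F)
                    then ((q : ℂ)) ^ d else 0)
              = ∑ y ∈ E, ∑ y' ∈ E,
                  (if y' = (s * s'⁻¹) • y then χ (t * (s' - s)) * (q : ℂ) ^ d else 0) := by
                refine sum_congr rfl fun y _ => sum_congr rfl fun y' _ => ?_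
                rw [mul_ite, mul_zero]
                exact if_congr (hcond y y') rfl rfl
            _ = ∑ y ∈ E, (if (s * s'⁻¹) • y ∈ E then χ (t * (s' - s)) * (q : ℂ) ^ d else 0) := by
                refine sum_congr rfl fun y _ => ?_
                exact Finset.sum_ite_eq' E ((s * s'⁻¹) • y)
                  (fun _ => χ (t * (s' - s)) * (q : ℂ) ^ d)
            _ = ((M (s * s'⁻¹) : ℂ)) * (χ (t * (s' - s)) * (q : ℂ) ^ d) := by
                rw [← Finset.sum_filter, Finset.sum_const, nsmul_eq_mul]
      _ = ∑ s' ∈ A, ∑ l ∈ A, ((M l : ℂ)) * (χ (t * (s' - l * s')) * (q : ℂ) ^ d) := by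
          rw [Finset.sum_comm]
          refine sum_congr rfl fun s' hs' => ?_
          have hs'0 : s' ≠ 0 := hmemA.mp hs'
          refine Finset.sum_nbij' (fun s => s * s'⁻¹) (fun l => l * s') ?_ ?_ ?_ ?_ ?_
          · intro a ha
            exact hmemA.mpr (mul_ne_zero (hmemA.mp ha) (inv_ne_zero hs'0))
          · intro l hl
            exact hmemA.mpr (mul_ne_zero (hmemA.mp hl) hs'0)
          · intro a ha; field_simp
          · intro l hl; field_simp
          · intro a ha
            have hrw : a * s'⁻¹ * s' = a := by field_simp
            rw [hrw]
      _ = ∑ l ∈ A, (M l : ℂ) * ((q : ℂ) ^ d * ∑ s' ∈ A, χ (t * (s' - l * s'))) := by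
          rw [Finset.sum_comm]
          refine sum_congr rfl fun l hl => ?_
          simp only [Finset.mul_sum]
          exact sum_congr rfl fun s' _ => by ring
      _ = ∑ l ∈ A, (M l : ℂ) * ((q : ℂ) ^ d * (if l = 1 then ((q : ℂ) - 1) else -1)) := by
          refine sum_congr rfl fun l hl => ?_
          congr 2
          by_cases hl1 : l = 1
          · subst hl1
            rw [if_pos rfl]
            have hz : ∀ s' ∈ A, χ (t * (s' - 1 * s')) = 1 := by
              intro s' _
              rw [show t * (s' - 1 * s') = 0 by ring, AddChar.map_zero_eq_one]
            rw [Finset.sum_congr rfl hz, Finset.sum_const, nsmul_eq_mul, mul_one]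
            have hcA : A.card = q - 1 := by
              rw [hAdef, Finset.card_erase_of_mem (Finset.mem_univ 0), Finset.card_univ]
            rw [hcA, Nat.cast_sub hq1.le, Nat.cast_one]
          · rw [if_neg hl1]
            have ha : t * (1 - l) ≠ 0 := mul_ne_zero ht (sub_ne_zero.mpr (Ne.symm hl1))
            have hz : ∀ s' ∈ A, χ (t * (s' - l * s')) = χ (s' * (t * (1 - l))) := by
              intro s' _
              rw [show t * (s' - l * s') = s' * (t * (1 - l)) by ring]
            rw [Finset.sum_congr rfl hz]
            exact sum_erase_eq_neg_one hχ ha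
      _ = (q : ℂ) ^ d * ∑ l ∈ A, (M l : ℂ) * (if l = 1 then ((q : ℂ) - 1) else -1) := by
          rw [Finset.mul_sum]
          exact sum_congr rfl fun l _ => by ring
  have hbig : (∑ x : Fin d → F, ‖f x‖ ^ 2) ≤ (q : ℝ) ^ (d + 1) * E.card := by
    have h1 : ((∑ x : Fin d → F, ‖f x‖ ^ 2 : ℝ) : ℂ)
        = ∑ x : Fin d → F, f x * (starRingEnd ℂ) (f x) := by
      push_cast
      refine sum_congr rfl fun x _ => ?_
      rw [Complex.mul_conj]
      norm_cast
      rw [Complex.normSq_eq_norm_sq]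
    have h2 : (((q : ℝ) ^ d * ∑ l ∈ A, (M l : ℝ) * (if l = 1 then (q : ℝ) - 1 else -1) : ℝ) : ℂ)
        = (q : ℂ) ^ d * ∑ l ∈ A, (M l : ℂ) * (if l = 1 then ((q : ℂ) - 1) else -1) := by
      push_cast
      congr 1
      refine Finset.sum_congr rfl fun l _ => ?_
      split_ifs <;> push_cast <;> ring
    have hr : (∑ x : Fin d → F, ‖f x‖ ^ 2)
        = (q : ℝ) ^ d * ∑ l ∈ A, (M l : ℝ) * (if l = 1 then (q : ℝ) - 1 else -1) := by
      have := h1.trans (key.trans h2.symm)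
      exact_mod_cast this
    rw [hr]
    have h1A : (1 : F) ∈ A := hmemA.mpr one_ne_zero
    have hq1r : (1 : ℝ) ≤ q := by exact_mod_cast hq1.le
    have hS : (∑ l ∈ A, (M l : ℝ) * (if l = 1 then (q : ℝ) - 1 else -1))
        ≤ ((q : ℝ) - 1) * E.card := by
      rw [← Finset.add_sum_erase _ _ h1A]
      have hh1 : (M 1 : ℝ) * (if (1 : F) = 1 then (q : ℝ) - 1 else -1)
          ≤ ((q : ℝ) - 1) * E.card := by
        rw [if_pos rfl, mul_comm]
        exact mul_le_mul_of_nonneg_left (hMle 1) (by linarith)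
      have hh2 : (∑ l ∈ A.erase 1, (M l : ℝ) * (if l = 1 then (q : ℝ) - 1 else -1)) ≤ 0 := by
        apply Finset.sum_nonpos
        intro l hl
        rw [if_neg (Finset.ne_of_mem_erase hl)]
        have h0 : (0 : ℝ) ≤ (M l : ℝ) := Nat.cast_nonneg _
        linarith
      linarith
    have hqd : (0 : ℝ) ≤ (q : ℝ) ^ d := by positivity
    have hcard0 : (0 : ℝ) ≤ (E.card : ℝ) := Nat.cast_nonneg _
    calc (q : ℝ) ^ d * ∑ l ∈ A, (M l : ℝ) * (if l = 1 then (q : ℝ) - 1 else -1)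
        ≤ (q : ℝ) ^ d * (((q : ℝ) - 1) * E.card) := mul_le_mul_of_nonneg_left hS hqd
      _ ≤ (q : ℝ) ^ (d + 1) * E.card := by
          rw [pow_succ]
          nlinarith [mul_nonneg hqd hcard0]
  -- Step 4: Cauchy-Schwarz chain
  have hnorm : ((E.card : ℝ)) ^ 2 = ‖∑ x ∈ E, f x‖ := by
    rw [hsumE]
    rw [show (-((E.card : ℂ) * E.card)) = -((E.card ^ 2 : ℕ) : ℂ) by push_cast; ring]
    rw [norm_neg, Complex.norm_natCast]
    push_cast; ring
  have hcs : ((E.card : ℝ) ^ 2) ^ 2 ≤ (E.card : ℝ) * ∑ x ∈ E, ‖f x‖ ^ 2 := by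
    have h1 : ((E.card : ℝ)) ^ 2 ≤ ∑ x ∈ E, ‖f x‖ := hnorm ▸ norm_sum_le _ _
    have h2 : (∑ x ∈ E, ‖f x‖) ^ 2 ≤ (E.card : ℝ) * ∑ x ∈ E, ‖f x‖ ^ 2 := by
      have := Finset.sum_mul_sq_le_sq_mul_sq E (fun _ => (1 : ℝ)) (fun x => ‖f x‖)
      simpa using this
    calc ((E.card : ℝ) ^ 2) ^ 2 ≤ (∑ x ∈ E, ‖f x‖) ^ 2 := by
          apply pow_le_pow_left₀ (by positivity) h1
      _ ≤ (E.card : ℝ) * ∑ x ∈ E, ‖f x‖ ^ 2 := h2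
  have hEuniv : (∑ x ∈ E, ‖f x‖ ^ 2) ≤ ∑ x : Fin d → F, ‖f x‖ ^ 2 :=
    Finset.sum_le_univ_sum_of_nonneg fun x => by positivity
  have hcard_pos : (0 : ℝ) < E.card := by
    have : (0 : ℝ) < (q : ℝ) ^ (((d : ℝ) + 1) / 2) := Real.rpow_pos_of_pos hq0 _
    linarith
  -- conclude |E|² ≤ q^(d+1)
  have hfinal : ((E.card : ℝ)) ^ 2 ≤ (q : ℝ) ^ (d + 1) := by
    have h3 : ((E.card : ℝ) ^ 2) ^ 2 ≤ (E.card : ℝ) * ((q : ℝ) ^ (d + 1) * E.card) := by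
      calc ((E.card : ℝ) ^ 2) ^ 2 ≤ (E.card : ℝ) * ∑ x ∈ E, ‖f x‖ ^ 2 := hcs
        _ ≤ (E.card : ℝ) * ((q : ℝ) ^ (d + 1) * E.card) := by
            apply mul_le_mul_of_nonneg_left _ (le_of_lt hcard_pos)
            exact le_trans hEuniv hbig
    have hc2 : (0 : ℝ) < (E.card : ℝ) ^ 2 := by positivity
    have h4 : (E.card : ℝ) ^ 2 * (E.card : ℝ) ^ 2 ≤ (q : ℝ) ^ (d + 1) * (E.card : ℝ) ^ 2 := by
      calc (E.card : ℝ) ^ 2 * (E.card : ℝ) ^ 2 = ((E.card : ℝ) ^ 2) ^ 2 := by ring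
        _ ≤ (E.card : ℝ) * ((q : ℝ) ^ (d + 1) * E.card) := h3
        _ = (q : ℝ) ^ (d + 1) * (E.card : ℝ) ^ 2 := by ring
    exact le_of_mul_le_mul_right h4 hc2
  -- contradiction with hE
  have hB : ((q : ℝ) ^ (((d : ℝ) + 1) / 2)) ^ 2 = (q : ℝ) ^ (d + 1) := by
    rw [← Real.rpow_natCast ((q : ℝ) ^ (((d : ℝ) + 1) / 2)) 2, ← Real.rpow_mul (le_of_lt hq0)]
    rw [show (((d : ℝ) + 1) / 2 * ((2 : ℕ) : ℝ)) = ((d + 1 : ℕ) : ℝ) by push_cast; ring,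
      Real.rpow_natCast]
  have hBpos : (0 : ℝ) < (q : ℝ) ^ (((d : ℝ) + 1) / 2) := Real.rpow_pos_of_pos hq0 _
  have : ((q : ℝ) ^ (((d : ℝ) + 1) / 2)) ^ 2 < ((E.card : ℝ)) ^ 2 := by
    apply pow_lt_pow_left₀ hE (le_of_lt hBpos)
    norm_num
  rw [hB] at this
  linarith
end
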